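/- Let r, N, k be positive integers with 1 ≤ k < r, and let x be an integer with |x/N - k/r| < 1/(Nk). Set a = 1/r - 1/N and assume a > 0. Then |Nk/x - r| ≤ 1/(a²N), where Nk/x is interpreted as a rational number (x ≠ 0 since x/N is within 1/(Nk) of k/r > 1/N). -/

import Mathlib

theorem stmt_2 (r N k : ℤ) (x : ℤ) (hr : 1 ≤ r) (hN : 1 ≤ N) (hk : 1 ≤ k) (hkr : k < r)
    (hx : |(x : ℚ) / N - (k : ℚ) / r| < 1 / (N * k))
    (a : ℚ) (ha : a = 1 / r - 1 / N) (hapos : 0 < a) :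
    |(N : ℚ) * k / x - r| ≤ 1 / (a ^ 2 * N) := by
  have hrQ : (1:ℚ) ≤ (r:ℚ) := by exact_mod_cast hr
  have hNQ : (1:ℚ) ≤ (N:ℚ) := by exact_mod_cast hN
  have hkQ : (1:ℚ) ≤ (k:ℚ) := by exact_mod_cast hk
  have hr0 : (0:ℚ) < r := by linarith
  have hN0 : (0:ℚ) < N := by linarith
  have hk0 : (0:ℚ) < k := by linarith
  have key : |(x:ℚ)*r - N*k| < r/k := by
    have h1 : |((x:ℚ)/N - k/r)| * (N*r) < (1/(N*k)) * (N*r) :=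
      mul_lt_mul_of_pos_right hx (by positivity)
    have h2 : |((x:ℚ)/N - k/r)| * (N*r) = |(x:ℚ)*r - N*k| := by
      rw [← abs_of_pos (show (0:ℚ) < N*r by positivity), ← abs_mul]
      congr 1
      field_simp
    have h3 : (1/((N:ℚ)*k)) * (N*r) = r/k := by
      field_simp
    rw [h2, h3] at h1; exact h1
  have hkey := abs_lt.mp key
  have hdiv : (r:ℚ)/k ≤ r := by
    rw [div_le_iff₀ hk0]; nlinarith
  have hx1 : (N:ℚ) - r < x*r := by nlinarith [hkey.1]
  have haN : a*N < x := by
    have h : a*N = N/r - 1 := by rw [ha]; field_simp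
    rw [h, sub_lt_iff_lt_add, div_lt_iff₀ hr0]
    nlinarith
  have hxpos : (0:ℚ) < x := by
    have : 0 < a*N := by positivity
    linarith
  have har : a*r < 1 := by
    have h : (1/(r:ℚ) - 1/N)*r = 1 - r/N := by field_simp
    rw [ha, h]
    have := div_pos hr0 hN0
    linarith
  have habs : |(N:ℚ)*k - r*x| < r/k := by
    have h : (N:ℚ)*k - r*x = -((x:ℚ)*r - N*k) := by ring
    rw [h, abs_neg]; exact key
  have heq : (N:ℚ)*k/x - r = (N*k - r*x)/x := by field_simp
  rw [heq, abs_div, abs_of_pos hxpos, div_le_div_iff₀ hxpos (by positivity)]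
  have h5 : |(N:ℚ)*k - r*x| * (a^2*N) ≤ (r/k)*(a^2*N) :=
    mul_le_mul_of_nonneg_right habs.le (by positivity)
  have h6 : ((r:ℚ)/k)*(a^2*N) ≤ x := by
    rw [div_mul_eq_mul_div, div_le_iff₀ hk0]
    nlinarith [mul_le_mul har.le haN.le (by positivity : (0:ℚ) ≤ a*N)
      (by norm_num : (0:ℚ) ≤ 1)]
  linarith
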